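/- Let A be a discrete abelian group, B ⊆ A a subgroup, and ρ a continuous pseudometric on the Pontryagin dual Â of A. Let S ⊆ B be a subset such that every element of B is a finite sum of elements of S. Then for every ε > 0 there exist a finite subset E ⊆ S and δ > 0 such that whenever χ ∈ Â satisfies |χ(b)| < δ for all b ∈ E, there exists χ̃ ∈ Â with χ̃(b) = 0 for all b ∈ B and ρ(χ̃, χ) < ε. -/

import Mathlib

/-- The Pontryagin dual of a discrete abelian group `A`: all homomorphisms `A → ℝ/ℤ` with the
topology of pointwise convergence. -/
abbrev PDual (A : Type*) [AddCommGroup A] : Type _ :=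
  {χ : A → AddCircle (1 : ℝ) // ∀ x y : A, χ (x + y) = χ x + χ y}

/-- A continuous pseudometric on a topological space. -/
structure IsContPseudoMetric {X : Type*} [TopologicalSpace X] (ρ : X → X → ℝ) : Prop where
  refl : ∀ x, ρ x x = 0
  symm : ∀ x y, ρ x y = ρ y x
  triangle : ∀ x y z, ρ x z ≤ ρ x y + ρ y z
  continuous : Continuous fun q : X × X => ρ q.1 q.2

/-- if every element of the subgroup `B ≤ A` is a finite sum of elements of
`S ⊆ B`, then for every `ε > 0` there are a finite `E ⊆ S` and `δ > 0` such that any character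
`χ` of `A` which is `δ`-small on `E` is `ε`-close (in a given continuous pseudometric `ρ` on
the dual) to a character annihilating `B`. -/
theorem stmt9 {A : Type*} [AddCommGroup A]
    (B : AddSubgroup A) (ρ : PDual A → PDual A → ℝ) (hρ : IsContPseudoMetric ρ)
    (S : Set A) (hSB : S ⊆ (B : Set A))
    (hgen : ∀ b ∈ B, ∃ l : List A, (∀ x ∈ l, x ∈ S) ∧ l.sum = b)
    (ε : ℝ) (hε : 0 < ε) :
    ∃ (E : Finset A) (δ : ℝ), ↑E ⊆ S ∧ 0 < δ ∧
      ∀ χ : PDual A, (∀ b ∈ E, ‖χ.1 b‖ < δ) →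
        ∃ χ' : PDual A, (∀ b ∈ B, χ'.1 b = 0) ∧ ρ χ' χ < ε := by
  classical
  haveI : Fact ((0:ℝ) < 1) := ⟨one_pos⟩
  -- the dual is a compact space
  have hset : {χ : A → AddCircle (1:ℝ) | ∀ x y : A, χ (x + y) = χ x + χ y}
      = ⋂ x : A, ⋂ y : A, {χ : A → AddCircle (1:ℝ) | χ (x + y) = χ x + χ y} := by
    ext χ; simp [Set.mem_iInter]
  have hclosed : IsClosed {χ : A → AddCircle (1:ℝ) | ∀ x y : A, χ (x + y) = χ x + χ y} := by
    rw [hset]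
    exact isClosed_iInter fun x => isClosed_iInter fun y =>
      isClosed_eq (continuous_apply _) ((continuous_apply x).add (continuous_apply y))
  haveI : CompactSpace (PDual A) := isCompact_iff_compactSpace.mp hclosed.isCompact
  -- the annihilator of B and the "far" set D
  set K : Set (PDual A) := {χ | ∀ b ∈ B, χ.1 b = 0} with hK
  set D : Set (PDual A) := {χ | ∀ χ' ∈ K, ε ≤ ρ χ' χ} with hD
  have hDclosed : IsClosed D := by
    have : D = ⋂ χ' ∈ K, {χ | ε ≤ ρ χ' χ} := by
      ext χ; simp [hD, Set.mem_iInter]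
    rw [this]
    exact isClosed_biInter fun χ' _ =>
      isClosed_le continuous_const (hρ.continuous.comp (Continuous.prodMk_right χ'))
  have hDcompact : IsCompact D := hDclosed.isCompact
  -- the closed constraint sets
  set Z : ↥S × ℕ → Set (PDual A) :=
    fun p => {χ | ‖χ.1 (p.1 : A)‖ ≤ 1 / ((p.2 : ℝ) + 1)} with hZ
  have hZclosed : ∀ p, IsClosed (Z p) := by
    intro p
    have : Continuous fun χ : PDual A => ‖χ.1 (p.1 : A)‖ :=
      continuous_norm.comp ((continuous_apply (p.1 : A)).comp continuous_subtype_val)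
    exact isClosed_le this continuous_const
  -- the total intersection is empty
  have hempty : (D ∩ ⋂ p, Z p) = ∅ := by
    rw [Set.eq_empty_iff_forall_notMem]
    rintro χ ⟨hχD, hχZ⟩
    simp only [Set.mem_iInter] at hχZ
    -- χ vanishes on S
    have hS0 : ∀ s ∈ S, χ.1 s = 0 := by
      intro s hs
      have hle : ∀ n : ℕ, ‖χ.1 s‖ ≤ 1 / ((n : ℝ) + 1) := fun n => hχZ (⟨s, hs⟩, n)
      have h0 : ‖χ.1 s‖ ≤ 0 := by
        by_contra h
        push_neg at h
        obtain ⟨n, hn⟩ := exists_nat_one_div_lt h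
        exact absurd (hle n) (not_le.mpr hn)
      exact norm_eq_zero.mp (le_antisymm h0 (norm_nonneg _))
    -- hence χ vanishes on B
    have hB0 : ∀ b ∈ B, χ.1 b = 0 := by
      intro b hb
      obtain ⟨l, hlS, hlsum⟩ := hgen b hb
      let f : A →+ AddCircle (1:ℝ) := AddMonoidHom.mk' χ.1 (fun a b => χ.2 a b)
      have : χ.1 b = f l.sum := by rw [hlsum]; rfl
      rw [this, map_list_sum]
      refine List.sum_eq_zero ?_
      intro x hx
      simp only [List.mem_map] at hx
      obtain ⟨a, ha, rfl⟩ := hx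
      exact hS0 a (hlS a ha)
    have := hχD χ hB0
    rw [hρ.refl] at this
    exact absurd this (not_le.mpr hε)
  -- extract a finite subfamily
  obtain ⟨t, ht⟩ := hDcompact.elim_finite_subfamily_closed Z hZclosed hempty
  -- build E and δ
  refine ⟨t.image (fun p => (p.1 : A)),
    (insert (1:ℝ) (t.image fun p => 1 / ((p.2 : ℝ) + 1))).min'
      ⟨1, Finset.mem_insert_self _ _⟩, ?_, ?_, ?_⟩
  · intro a ha
    simp only [Finset.coe_image, Set.mem_image, Finset.mem_coe] at ha
    obtain ⟨p, _, rfl⟩ := ha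
    exact p.1.2
  · apply (Finset.lt_min'_iff _ _).mpr
    intro b hb
    rcases Finset.mem_insert.mp hb with h | h
    · rw [h]; exact one_pos
    · simp only [Finset.mem_image] at h
      obtain ⟨p, _, rfl⟩ := h
      positivity
  · intro χ hχ
    have hχmem : χ ∈ ⋂ p ∈ t, Z p := by
      simp only [Set.mem_iInter]
      intro p hp
      have h1 : (p.1 : A) ∈ t.image (fun p => (p.1 : A)) :=
        Finset.mem_image_of_mem _ hp
      have h2 : (insert (1:ℝ) (t.image fun p => 1 / ((p.2 : ℝ) + 1))).min'
          ⟨1, Finset.mem_insert_self _ _⟩ ≤ 1 / ((p.2 : ℝ) + 1) :=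
        Finset.min'_le _ _ (Finset.mem_insert_of_mem (Finset.mem_image_of_mem _ hp))
      exact le_of_lt (lt_of_lt_of_le (hχ _ h1) h2)
    have hχnD : χ ∉ D := by
      intro hχD
      exact Set.eq_empty_iff_forall_notMem.mp ht χ ⟨hχD, hχmem⟩
    simp only [hD, Set.mem_setOf_eq, not_forall, not_le] at hχnD
    obtain ⟨χ', hχ'K, hχ'ρ⟩ := hχnD
    exact ⟨χ', hχ'K, hχ'ρ⟩
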